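/- Let R, R* be differentiable curves in SO(3) with Ṙ = Rω̂ and Ṙ* = R*ω̂*, and define e_ω = ω − RᵀR*ω*. Then the orientation error e_R = (1/2)(R*ᵀR − RᵀR*)ᵛ satisfies ė_R = E(R,R*) e_ω, where E(R,R*) = (1/2)(tr(RᵀR*)I − RᵀR*). -/

import Mathlib

open Matrix
attribute [local instance] Matrix.normedAddCommGroup Matrix.normedSpace

noncomputable def hat (v : Fin 3 → ℝ) : Matrix (Fin 3) (Fin 3) ℝ :=
  !![0, -v 2, v 1; v 2, 0, -v 0; -v 1, v 0, 0]

noncomputable def vee (A : Matrix (Fin 3) (Fin 3) ℝ) : Fin 3 → ℝ :=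
  ![A 2 1, A 0 2, A 1 0]

abbrev M3 := Matrix (Fin 3) (Fin 3) ℝ

section

attribute [-instance] instTopologicalSpaceMatrix Matrix.instUniformSpace

noncomputable def mulCLM : M3 →L[ℝ] M3 →L[ℝ] M3 :=
  LinearMap.toContinuousLinearMap
  { toFun := fun A => LinearMap.toContinuousLinearMap (LinearMap.mulLeft ℝ A)
    map_add' := by intro a b; ext x; simp [add_mul]
    map_smul' := by intro c a; ext x; simp [smul_mul_assoc] }

@[simp] lemma mulCLM_apply (A B : M3) : mulCLM A B = A * B := by
  simp [mulCLM]

end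

lemma HasDerivAt.matMul {u v : ℝ → M3} {u' v' : M3} {t : ℝ}
    (hu : HasDerivAt u u' t) (hv : HasDerivAt v v' t) :
    HasDerivAt (fun s => u s * v s) (u' * v t + u t * v') t := by
  have hc : HasDerivAt (fun s => mulCLM (u s)) (mulCLM u') t :=
    mulCLM.hasFDerivAt.comp_hasDerivAt t hu
  exact hc.clm_apply hv

noncomputable def transCLM : M3 →L[ℝ] M3 :=
  LinearMap.toContinuousLinearMap
  { toFun := fun A => Aᵀ
    map_add' := fun a b => Matrix.transpose_add a b
    map_smul' := fun c a => Matrix.transpose_smul c a }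

lemma HasDerivAt.matTranspose {u : ℝ → M3} {u' : M3} {t : ℝ}
    (hu : HasDerivAt u u' t) : HasDerivAt (fun s => (u s)ᵀ) u'ᵀ t := by
  have := transCLM.hasFDerivAt.comp_hasDerivAt t hu
  exact this

noncomputable def veeCLM : M3 →L[ℝ] (Fin 3 → ℝ) :=
  LinearMap.toContinuousLinearMap
  { toFun := vee
    map_add' := by intro a b; funext i; fin_cases i <;> simp [vee]
    map_smul' := by intro c a; funext i; fin_cases i <;> simp [vee] }

lemma HasDerivAt.vee' {u : ℝ → M3} {u' : M3} {t : ℝ}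
    (hu : HasDerivAt u u' t) : HasDerivAt (fun s => vee (u s)) (vee u') t := by
  have := veeCLM.hasFDerivAt.comp_hasDerivAt t hu
  exact this

lemma vee_sub (A B : M3) : vee (A - B) = vee A - vee B := by
  funext i; fin_cases i <;> simp [vee]

lemma hat_transpose (v : Fin 3 → ℝ) : (hat v)ᵀ = -hat v := by
  ext i j; fin_cases i <;> fin_cases j <;> simp [hat]

-- L1: general identity
lemma vee_sym (A : M3) (v : Fin 3 → ℝ) :
    vee (Aᵀ * hat v + hat v * A) = (Matrix.trace A) • v - A *ᵥ v := by
  funext i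
  fin_cases i <;>
    simp [vee, hat, Matrix.mul_apply, Matrix.trace, Matrix.diag, Fin.sum_univ_three,
      Matrix.mulVec, Matrix.vecMul, dotProduct] <;> ring

set_option maxHeartbeats 2000000 in
lemma hat_conj (A : M3) (hA : Aᵀ * A = 1) (hdet : A.det = 1) (v : Fin 3 → ℝ) :
    A * hat v = hat (A *ᵥ v) * A := by
  have hadj : Aᵀ = adjugate A := by
    have h1 : A⁻¹ = Aᵀ := Matrix.inv_eq_left_inv hA
    have h2 : A⁻¹ = adjugate A := by
      rw [Matrix.inv_def, hdet, Ring.inverse_one, one_smul]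
    rw [← h1, h2]
  rw [Matrix.adjugate_fin_three] at hadj
  have h00 : A 0 0 = A 1 1 * A 2 2 - A 1 2 * A 2 1 := by
    simpa using congrFun (congrFun hadj 0) 0
  have h01 : A 0 1 = -(A 1 0 * A 2 2) + A 1 2 * A 2 0 := by
    simpa using congrFun (congrFun hadj 1) 0
  have h02 : A 0 2 = A 1 0 * A 2 1 - A 1 1 * A 2 0 := by
    simpa using congrFun (congrFun hadj 2) 0
  have h10 : A 1 0 = -(A 0 1 * A 2 2) + A 0 2 * A 2 1 := by
    simpa using congrFun (congrFun hadj 0) 1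
  have h11 : A 1 1 = A 0 0 * A 2 2 - A 0 2 * A 2 0 := by
    simpa using congrFun (congrFun hadj 1) 1
  have h12 : A 1 2 = -(A 0 0 * A 2 1) + A 0 1 * A 2 0 := by
    simpa using congrFun (congrFun hadj 2) 1
  have h20 : A 2 0 = A 0 1 * A 1 2 - A 0 2 * A 1 1 := by
    simpa using congrFun (congrFun hadj 0) 2
  have h21 : A 2 1 = -(A 0 0 * A 1 2) + A 0 2 * A 1 0 := by
    simpa using congrFun (congrFun hadj 1) 2
  have h22 : A 2 2 = A 0 0 * A 1 1 - A 0 1 * A 1 0 := by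
    simpa using congrFun (congrFun hadj 2) 2
  ext i j
  fin_cases i <;> fin_cases j <;>
    simp [hat, Matrix.mul_apply, Fin.sum_univ_three, Matrix.mulVec, Matrix.vecMul,
      dotProduct]
  · linear_combination v 2 * h01 - v 1 * h02
  · linear_combination -v 2 * h00 + v 0 * h02
  · linear_combination v 1 * h00 - v 0 * h01
  · linear_combination v 2 * h11 - v 1 * h12
  · linear_combination -v 2 * h10 + v 0 * h12
  · linear_combination v 1 * h10 - v 0 * h11
  · linear_combination v 2 * h21 - v 1 * h22
  · linear_combination -v 2 * h20 + v 0 * h22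
  · linear_combination v 1 * h20 - v 0 * h21

theorem eR_deriv (R Rs : ℝ → Matrix (Fin 3) (Fin 3) ℝ) (ω ωs : ℝ → Fin 3 → ℝ)
    (hR : ∀ t, (R t)ᵀ * R t = 1) (hdetR : ∀ t, (R t).det = 1)
    (hRs : ∀ t, (Rs t)ᵀ * Rs t = 1) (hdetRs : ∀ t, (Rs t).det = 1)
    (hRdot : ∀ t, HasDerivAt R (R t * hat (ω t)) t)
    (hRsdot : ∀ t, HasDerivAt Rs (Rs t * hat (ωs t)) t) (t : ℝ) :
    HasDerivAt (fun s => ((1:ℝ)/2) • vee ((Rs s)ᵀ * R s - (R s)ᵀ * Rs s))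
      ((((1:ℝ)/2) • (Matrix.trace ((R t)ᵀ * Rs t) • (1 : Matrix (Fin 3) (Fin 3) ℝ) - (R t)ᵀ * Rs t)) *ᵥ
        (ω t - ((R t)ᵀ * Rs t) *ᵥ ωs t)) t := by
  set A : M3 := (R t)ᵀ * Rs t with hA
  have hRRT : R t * (R t)ᵀ = 1 := mul_eq_one_comm.mp (hR t)
  have hAorth : Aᵀ * A = 1 := by
    rw [hA, Matrix.transpose_mul, Matrix.transpose_transpose, Matrix.mul_assoc,
      ← Matrix.mul_assoc (R t), hRRT, Matrix.one_mul, hRs t]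
  have hAdet : A.det = 1 := by
    rw [hA, Matrix.det_mul, Matrix.det_transpose, hdetR t, hdetRs t, one_mul]
  set w : Fin 3 → ℝ := A *ᵥ ωs t with hw
  -- derivative of Q
  have hQ : HasDerivAt (fun s => (Rs s)ᵀ * R s - (R s)ᵀ * Rs s)
      (((Rs t * hat (ωs t))ᵀ * R t + (Rs t)ᵀ * (R t * hat (ω t))) -
       ((R t * hat (ω t))ᵀ * Rs t + (R t)ᵀ * (Rs t * hat (ωs t)))) t :=
    ((hRsdot t).matTranspose.matMul (hRdot t)).sub
      ((hRdot t).matTranspose.matMul (hRsdot t))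
  have hmain := (hQ.vee').const_smul ((1:ℝ)/2)
  convert hmain using 1
  · rfl
  · rfl
  · rfl
  · rfl
  -- now the algebraic identity
  have hc : A * hat (ωs t) = hat w * A := hat_conj A hAorth hAdet (ωs t)
  have hc2 : hat (ωs t) * Aᵀ = Aᵀ * hat w := by
    have := congrArg Matrix.transpose hc
    simp only [Matrix.transpose_mul, hat_transpose, Matrix.neg_mul, Matrix.mul_neg,
      neg_inj] at this
    exact this
  have hAT : Aᵀ = (Rs t)ᵀ * R t := by
    rw [hA, Matrix.transpose_mul, Matrix.transpose_transpose]
  have e1 : -hat (ωs t) * (Rs t)ᵀ * R t = -(Aᵀ * hat w) := by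
    rw [Matrix.neg_mul, Matrix.neg_mul, Matrix.mul_assoc, ← hAT, hc2]
  have e2 : (Rs t)ᵀ * (R t * hat (ω t)) = Aᵀ * hat (ω t) := by
    rw [← Matrix.mul_assoc, ← hAT]
  have e3 : -hat (ω t) * (R t)ᵀ * Rs t = -(hat (ω t) * A) := by
    rw [Matrix.neg_mul, Matrix.neg_mul, Matrix.mul_assoc, ← hA]
  have e4 : (R t)ᵀ * (Rs t * hat (ωs t)) = hat w * A := by
    rw [← Matrix.mul_assoc, ← hA, hc]
  have hD : ((Rs t * hat (ωs t))ᵀ * R t + (Rs t)ᵀ * (R t * hat (ω t))) -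
       ((R t * hat (ω t))ᵀ * Rs t + (R t)ᵀ * (Rs t * hat (ωs t)))
      = (Aᵀ * hat (ω t) + hat (ω t) * A) - (Aᵀ * hat w + hat w * A) := by
    rw [Matrix.transpose_mul, Matrix.transpose_mul, hat_transpose, hat_transpose,
      e1, e2, e3, e4]
    abel
  rw [hD, vee_sub, vee_sym, vee_sym]
  rw [Matrix.smul_mulVec, Matrix.sub_mulVec, Matrix.smul_mulVec,
    Matrix.one_mulVec, Matrix.mulVec_sub]
  module
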